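/- With stiffness ξ uniform on [k_a,k_b], 0 < k_a < k_b, the second moment of the velocity response u̇(t,ξ) = −a·√(ξ/m)·sin(√(ξ/m)t) + b·cos(√(ξ/m)t) satisfies lim_{t→∞} (1/(k_b−k_a)) ∫_{k_a}^{k_b} u̇(t,ξ)² dξ = ((k_a+k_b)/(4m))·a² + (1/2)·b². -/

import Mathlib

open Filter Real

/-- numerator of the oscillatory part of the antiderivative -/
noncomputable def oscN (m a b t x : ℝ) : ℝ :=
  ((m*b^2*t^3 - 2*m*a*b*t^2 + 3*m*a^2*t/2)*x - (m*a^2*t^3)*x^3) *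
      (Real.sin (x*t) * Real.cos (x*t))
  + ((m*a*b*t^3 - 3*m*a^2*t^2/4)*x^2 + (m*b^2*t^2/4 - m*a*b*t/2 + 3*m*a^2/8)) *
      (1 - 2*Real.sin (x*t)^2)

/-- antiderivative (in `x = √(ξ/m)`) of the squared velocity -/
noncomputable def Hfun (m a b t x : ℝ) : ℝ :=
  m*a^2*(x^2)^2/4 + m*b^2*x^2/2 + oscN m a b t x / t^4

lemma aux1 (q1 q2 r1 r0 t x : ℝ) :
    HasDerivAt (fun y : ℝ => (q1*y - q2*y^3) * (Real.sin (y*t) * Real.cos (y*t))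
        + (r1*y^2 + r0) * (1 - 2*Real.sin (y*t)^2))
      ((q1 - 3*q2*x^2) * (Real.sin (x*t) * Real.cos (x*t))
        + (q1*x - q2*x^3) * (t*(Real.cos (x*t)^2 - Real.sin (x*t)^2))
        + 2*r1*x*(1 - 2*Real.sin (x*t)^2)
        + (r1*x^2 + r0) * (-(4*t)*(Real.sin (x*t)*Real.cos (x*t)))) x := by
  have hS : HasDerivAt (fun y : ℝ => Real.sin (y*t)) (Real.cos (x*t) * t) x := by
    exact (Real.hasDerivAt_sin (x*t)).comp x (hasDerivAt_mul_const t)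
  have hC : HasDerivAt (fun y : ℝ => Real.cos (y*t)) (-Real.sin (x*t) * t) x := by
    exact (Real.hasDerivAt_cos (x*t)).comp x (hasDerivAt_mul_const t)
  have h := ((((hasDerivAt_id x).const_mul q1).sub
      ((hasDerivAt_pow 3 x).const_mul q2)).mul (hS.mul hC)).add
      ((((hasDerivAt_pow 2 x).const_mul r1).add_const r0).mul
        ((hasDerivAt_const x (1:ℝ)).sub ((hS.pow 2).const_mul 2)))
  refine h.congr_deriv ?_
  simp only [Pi.mul_apply, Pi.sub_apply, Pi.pow_apply, id_eq]
  push_cast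
  ring

lemma Hfun_hasDerivAt (m a b t : ℝ) (ht : t ≠ 0) (x : ℝ) :
    HasDerivAt (fun y => Hfun m a b t y)
      ((-a*x*Real.sin (x*t) + b*Real.cos (x*t))^2 * (2*m*x)) x := by
  have ht4 : t^4 ≠ 0 := pow_ne_zero _ ht
  have hmain : HasDerivAt (fun y : ℝ => m*a^2*(y^2)^2/4 + m*b^2*y^2/2)
      (m*a^2*x^3 + m*b^2*x) x := by
    have h := ((((hasDerivAt_pow 2 x).pow 2).const_mul (m*a^2)).div_const 4).add
      (((hasDerivAt_pow 2 x).const_mul (m*b^2)).div_const 2)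
    refine h.congr_deriv ?_
    norm_num
    ring
  have hosc := (aux1 (m*b^2*t^3 - 2*m*a*b*t^2 + 3*m*a^2*t/2) (m*a^2*t^3)
      (m*a*b*t^3 - 3*m*a^2*t^2/4) (m*b^2*t^2/4 - m*a*b*t/2 + 3*m*a^2/8) t x).div_const (t^4)
  have htot := hmain.add hosc
  have h3 : ((m*b^2*t^3 - 2*m*a*b*t^2 + 3*m*a^2*t/2) - 3*(m*a^2*t^3)*x^2) *
        (Real.sin (x*t) * Real.cos (x*t))
      + ((m*b^2*t^3 - 2*m*a*b*t^2 + 3*m*a^2*t/2)*x - (m*a^2*t^3)*x^3) *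
        (t*(Real.cos (x*t)^2 - Real.sin (x*t)^2))
      + 2*(m*a*b*t^3 - 3*m*a^2*t^2/4)*x*(1 - 2*Real.sin (x*t)^2)
      + ((m*a*b*t^3 - 3*m*a^2*t^2/4)*x^2 + (m*b^2*t^2/4 - m*a*b*t/2 + 3*m*a^2/8)) *
        (-(4*t)*(Real.sin (x*t)*Real.cos (x*t)))
      = ((-a*x*Real.sin (x*t) + b*Real.cos (x*t))^2 * (2*m*x)
          - (m*a^2*x^3 + m*b^2*x)) * t^4 := by
    linear_combination (-(m*b^2*t^4*x) - 2*m*a*b*t^3*x + 3/2*m*a^2*t^2*x - m*a^2*t^4*x^3) *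
      Real.sin_sq_add_cos_sq (x*t)
  have h4 : (m*a^2*x^3 + m*b^2*x) +
      (((m*b^2*t^3 - 2*m*a*b*t^2 + 3*m*a^2*t/2) - 3*(m*a^2*t^3)*x^2) *
        (Real.sin (x*t) * Real.cos (x*t))
      + ((m*b^2*t^3 - 2*m*a*b*t^2 + 3*m*a^2*t/2)*x - (m*a^2*t^3)*x^3) *
        (t*(Real.cos (x*t)^2 - Real.sin (x*t)^2))
      + 2*(m*a*b*t^3 - 3*m*a^2*t^2/4)*x*(1 - 2*Real.sin (x*t)^2)
      + ((m*a*b*t^3 - 3*m*a^2*t^2/4)*x^2 + (m*b^2*t^2/4 - m*a*b*t/2 + 3*m*a^2/8)) *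
        (-(4*t)*(Real.sin (x*t)*Real.cos (x*t)))) / t^4
      = (-a*x*Real.sin (x*t) + b*Real.cos (x*t))^2 * (2*m*x) := by
    rw [h3]
    field_simp
    ring
  rw [← h4]
  exact htot

lemma tendsto_div_pow (c : ℝ) {n : ℕ} (hn : n ≠ 0) :
    Tendsto (fun t : ℝ => c / t ^ n) atTop (nhds 0) :=
  Filter.Tendsto.div_atTop tendsto_const_nhds (tendsto_pow_atTop hn)

lemma tendsto_mul_bdd {f g : ℝ → ℝ} (hf : Tendsto f atTop (nhds 0)) (C : ℝ)
    (hg : ∀ t, |g t| ≤ C) : Tendsto (fun t => f t * g t) atTop (nhds 0) := by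
  refine squeeze_zero_norm (fun t => ?_) (by simpa using hf.abs.mul_const C)
  calc ‖f t * g t‖ = |f t| * |g t| := abs_mul _ _
    _ ≤ |f t| * C := mul_le_mul_of_nonneg_left (hg t) (abs_nonneg _)

lemma osc_tendsto (m a b x : ℝ) :
    Tendsto (fun t : ℝ => oscN m a b t x / t^4) atTop (nhds 0) := by
  have hA : Tendsto (fun t : ℝ => (m*b^2*x - m*a^2*x^3)/t^1 + (-(2*m*a*b*x))/t^2
      + (3*m*a^2*x/2)/t^3) atTop (nhds 0) := by
    simpa using ((tendsto_div_pow (m*b^2*x - m*a^2*x^3) one_ne_zero).add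
      (tendsto_div_pow (-(2*m*a*b*x)) two_ne_zero)).add
      (tendsto_div_pow (3*m*a^2*x/2) three_ne_zero)
  have hB : Tendsto (fun t : ℝ => (m*a*b*x^2)/t^1 + (m*b^2/4 - 3*m*a^2*x^2/4)/t^2
      + (-(m*a*b)/2)/t^3 + (3*m*a^2/8)/t^4) atTop (nhds 0) := by
    simpa using (((tendsto_div_pow (m*a*b*x^2) one_ne_zero).add
      (tendsto_div_pow (m*b^2/4 - 3*m*a^2*x^2/4) two_ne_zero)).add
      (tendsto_div_pow (-(m*a*b)/2) three_ne_zero)).add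
      (tendsto_div_pow (3*m*a^2/8) (by norm_num : (4:ℕ) ≠ 0))
  have hbd1 : ∀ t : ℝ, |Real.sin (x*t) * Real.cos (x*t)| ≤ 1 := by
    intro t
    rw [abs_mul]
    exact mul_le_one₀ (Real.abs_sin_le_one _) (abs_nonneg _) (Real.abs_cos_le_one _)
  have hbd2 : ∀ t : ℝ, |1 - 2*Real.sin (x*t)^2| ≤ 3 := by
    intro t
    have h1 : Real.sin (x*t)^2 ≤ 1 := Real.sin_sq_le_one _
    have h2 : 0 ≤ Real.sin (x*t)^2 := sq_nonneg _
    rw [abs_le]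
    constructor <;> nlinarith
  have h1 := (tendsto_mul_bdd hA 1 hbd1).add (tendsto_mul_bdd hB 3 hbd2)
  rw [add_zero] at h1
  apply h1.congr'
  filter_upwards [eventually_ge_atTop (1:ℝ)] with t htt
  have ht0 : t ≠ 0 := (lt_of_lt_of_le one_pos htt).ne'
  simp only [oscN]
  field_simp
  ring

theorem stmt2 (m ka kb a b : ℝ) (hm : 0 < m) (hka : 0 < ka) (hkb : ka < kb) :
    Filter.Tendsto
      (fun t : ℝ => (1 / (kb - ka)) *
        ∫ ξ in ka..kb,
          (-a * Real.sqrt (ξ / m) * Real.sin (Real.sqrt (ξ / m) * t)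
            + b * Real.cos (Real.sqrt (ξ / m) * t)) ^ 2)
      Filter.atTop (nhds (((ka + kb) / (4 * m)) * a ^ 2 + (1 / 2) * b ^ 2)) := by
  have hm0 : m ≠ 0 := hm.ne'
  have hkb0 : (0:ℝ) < kb := hka.trans hkb
  have hd : kb - ka ≠ 0 := sub_ne_zero.mpr hkb.ne'
  have hsa2 : Real.sqrt (ka/m) ^ 2 = ka/m := Real.sq_sqrt (by positivity)
  have hsb2 : Real.sqrt (kb/m) ^ 2 = kb/m := Real.sq_sqrt (by positivity)
  have key : ∀ t : ℝ, t ≠ 0 →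
      (∫ ξ in ka..kb, (-a * Real.sqrt (ξ / m) * Real.sin (Real.sqrt (ξ / m) * t)
          + b * Real.cos (Real.sqrt (ξ / m) * t)) ^ 2)
      = Hfun m a b t (Real.sqrt (kb/m)) - Hfun m a b t (Real.sqrt (ka/m)) := by
    intro t ht
    apply intervalIntegral.integral_eq_sub_of_hasDerivAt
      (f := fun ξ : ℝ => Hfun m a b t (Real.sqrt (ξ/m)))
    · intro ξ hξ
      rw [Set.uIcc_of_le hkb.le] at hξ
      have hξ0 : 0 < ξ := lt_of_lt_of_le hka hξ.1
      have hs0 : 0 < Real.sqrt (ξ/m) := Real.sqrt_pos.mpr (by positivity)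
      have hsq : HasDerivAt (fun y : ℝ => Real.sqrt (y/m))
          (1/(2*Real.sqrt (ξ/m)) * (1/m)) ξ := by
        have h0 : ξ/m ≠ 0 := by positivity
        exact (Real.hasDerivAt_sqrt h0).comp ξ ((hasDerivAt_id ξ).div_const m)
      have h' : HasDerivAt (fun ξ : ℝ => Hfun m a b t (Real.sqrt (ξ/m)))
          ((-a*Real.sqrt (ξ/m)*Real.sin (Real.sqrt (ξ/m)*t)
              + b*Real.cos (Real.sqrt (ξ/m)*t))^2 * (2*m*Real.sqrt (ξ/m))
            * (1/(2*Real.sqrt (ξ/m)) * (1/m))) ξ := by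
        have := (Hfun_hasDerivAt m a b t ht (Real.sqrt (ξ/m))).comp ξ hsq
        exact this
      have heq : (-a*Real.sqrt (ξ/m)*Real.sin (Real.sqrt (ξ/m)*t)
              + b*Real.cos (Real.sqrt (ξ/m)*t))^2 * (2*m*Real.sqrt (ξ/m))
            * (1/(2*Real.sqrt (ξ/m)) * (1/m))
          = (-a * Real.sqrt (ξ / m) * Real.sin (Real.sqrt (ξ / m) * t)
            + b * Real.cos (Real.sqrt (ξ / m) * t)) ^ 2 := by
        field_simp
      rw [← heq]
      exact h'
    · apply Continuous.intervalIntegrable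
      fun_prop
  have hN : Tendsto (fun t : ℝ => (((ka + kb) / (4 * m)) * a ^ 2 + (1 / 2) * b ^ 2)
      + (1/(kb-ka)) * (oscN m a b t (Real.sqrt (kb/m)) / t^4
          - oscN m a b t (Real.sqrt (ka/m)) / t^4))
      atTop (nhds (((ka + kb) / (4 * m)) * a ^ 2 + (1 / 2) * b ^ 2)) := by
    have h := ((osc_tendsto m a b (Real.sqrt (kb/m))).sub
      (osc_tendsto m a b (Real.sqrt (ka/m)))).const_mul (1/(kb-ka))
    simpa using tendsto_const_nhds.add h
  apply hN.congr'
  filter_upwards [eventually_ge_atTop (1:ℝ)] with t htt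
  have ht0 : t ≠ 0 := (lt_of_lt_of_le one_pos htt).ne'
  rw [key t ht0]
  simp only [Hfun]
  rw [hsb2, hsa2]
  field_simp
  ring
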